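/- Let F separate points of R^D. The modules S_ħ(R,δ) and S_ħ(R̃,δ̃) over A^D_{ħ,q}(F) are isomorphic if and only if R R̃^{-1} ∈ GL_D(Z) and R(δ − δ̃) ∈ Z^D. -/

import Mathlib

open scoped BigOperators

noncomputable section

abbrev V (D : ℕ) := Fin D → ℝ
abbrev L (D : ℕ) := Fin D → ℤ

def cz {D : ℕ} (n : L D) : V D := fun i => (n i : ℝ)

def Nr (D : ℕ) (x y : Fin D → ℝ) : ℝ :=
  ∑ m : Fin D, ∑ n : Fin D, if (n : ℕ) < (m : ℕ) then x m * y n else 0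

def Nz (D : ℕ) (k l : L D) : ℤ :=
  ∑ m : Fin D, ∑ n : Fin D, if (n : ℕ) < (m : ℕ) then k m * l n else 0

def Sh (D : ℕ) (hb : ℝ) (k : L D) (f : V D → ℂ) : V D → ℂ :=
  fun u => f (fun i => u i + hb * (k i : ℝ))

abbrev Alg (D : ℕ) := (L D) →₀ ((V D) → ℂ)

def amul (D : ℕ) (hb : ℝ) (q : ℂ) (a b : Alg D) : Alg D :=
  a.sum fun k f => b.sum fun l g =>
    Finsupp.single (k + l) ((q ^ (Nz D k l)) • (f * Sh D hb k g))

def astar (D : ℕ) (hb : ℝ) (q : ℂ) (a : Alg D) : Alg D :=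
  a.sum fun k f => Finsupp.single (-k) ((q ^ (Nz D (-k) (-k))) • Sh D hb (-k) (star f))

structure GoodF (D : ℕ) (hb : ℝ) (F : Set (V D → ℂ)) : Prop where
  zero_mem : (0 : V D → ℂ) ∈ F
  add_mem : ∀ f ∈ F, ∀ g ∈ F, f + g ∈ F
  mul_mem : ∀ f ∈ F, ∀ g ∈ F, f * g ∈ F
  smul_mem : ∀ (c : ℂ), ∀ f ∈ F, c • f ∈ F
  star_mem : ∀ f ∈ F, star f ∈ F
  shift_mem : ∀ (k : L D), ∀ f ∈ F, Sh D hb k f ∈ F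

def SeparatesPts (D : ℕ) (F : Set (V D → ℂ)) : Prop :=
  ∀ x y : V D, x ≠ y → ∃ f ∈ F, f x ≠ f y


abbrev DMod (D : ℕ) := (L D) →₀ ℂ

def Rinv {D : ℕ} (R : Matrix (Fin D) (Fin D) ℤ) : Matrix (Fin D) (Fin D) ℝ :=
  (R.map (Int.cast : ℤ → ℝ))⁻¹

def dact (D : ℕ) (hb : ℝ) (q : ℂ) (R : Matrix (Fin D) (Fin D) ℤ) (δ : V D)
    (a : Alg D) (v : DMod D) : DMod D :=
  a.sum fun n f => v.sum fun k c =>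
    Finsupp.single (k - R.mulVec n)
      ((q ^ (((Nr D ((Rinv R).mulVec (cz k) - cz n + δ) (cz n) : ℝ) : ℂ))) *
        f (hb • ((Rinv R).mulVec (cz k) - cz n + δ)) * c)

def DIso (D : ℕ) (hb : ℝ) (q : ℂ) (F : Set (V D → ℂ))
    (R : Matrix (Fin D) (Fin D) ℤ) (δ : V D)
    (R' : Matrix (Fin D) (Fin D) ℤ) (δ' : V D) : Prop :=
  ∃ φ : DMod D ≃ₗ[ℂ] DMod D,
    ∀ a : Alg D, (∀ k, a k ∈ F) → ∀ v : DMod D,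
      φ (dact D hb q R δ a v) = dact D hb q R' δ' a (φ v)



lemma cz_zero {D : ℕ} : cz (0 : L D) = 0 := by funext i; simp [cz]

lemma cz_neg {D : ℕ} (n : L D) : cz (-n) = -cz n := by funext i; simp [cz]

lemma cz_add {D : ℕ} (m n : L D) : cz (m + n) = cz m + cz n := by funext i; simp [cz]

lemma cz_sub {D : ℕ} (m n : L D) : cz (m - n) = cz m - cz n := by funext i; simp [cz]

lemma cz_single {D : ℕ} (i : Fin D) : cz (Pi.single i (1:ℤ)) = Pi.single i (1:ℝ) := by
  funext j
  simp [cz, Pi.single_apply, apply_ite (Int.cast : ℤ → ℝ)]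

lemma map_cast_mul {D : ℕ} (M N : Matrix (Fin D) (Fin D) ℤ) :
    (M * N).map (Int.cast : ℤ → ℝ) = M.map (Int.cast : ℤ → ℝ) * N.map (Int.cast : ℤ → ℝ) :=
  Matrix.map_mul (f := Int.castRingHom ℝ)

lemma map_cast_inj {D : ℕ} {M N : Matrix (Fin D) (Fin D) ℤ}
    (h : M.map (Int.cast : ℤ → ℝ) = N.map (Int.cast : ℤ → ℝ)) : M = N := by
  ext i j
  have := congrFun (congrFun (congrArg (fun A => (A : Matrix (Fin D) (Fin D) ℝ)) h) i) j
  simpa [Matrix.map_apply] using this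

lemma cz_mulVec {D : ℕ} (M : Matrix (Fin D) (Fin D) ℤ) (x : L D) :
    cz (M.mulVec x) = (M.map (Int.cast : ℤ → ℝ)).mulVec (cz x) := by
  funext j
  simp [cz, Matrix.mulVec, dotProduct, Matrix.map_apply]

lemma det_cast {D : ℕ} (M : Matrix (Fin D) (Fin D) ℤ) :
    (M.map (Int.cast : ℤ → ℝ)).det = (M.det : ℝ) :=
  ((Int.castRingHom ℝ).map_det M).symm

lemma isUnit_det_cast {D : ℕ} {M : Matrix (Fin D) (Fin D) ℤ} (h : M.det ≠ 0) :
    IsUnit (M.map (Int.cast : ℤ → ℝ)).det := by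
  rw [det_cast]
  exact isUnit_iff_ne_zero.mpr (by exact_mod_cast h)

lemma Nr_right_zero {D : ℕ} (x : V D) : Nr D x 0 = 0 := by simp [Nr]

lemma dact_diag {D : ℕ} (hb : ℝ) (q : ℂ) (R : Matrix (Fin D) (Fin D) ℤ) (δ : V D)
    (f : V D → ℂ) (v : DMod D) :
    dact D hb q R δ (Finsupp.single 0 f) v
      = v.sum fun k c => Finsupp.single k (f (hb • ((Rinv R).mulVec (cz k) + δ)) * c) := by
  unfold dact
  rw [Finsupp.sum_single_index]
  · refine Finsupp.sum_congr fun k hk => ?_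
    simp [cz_zero, Nr_right_zero, Matrix.mulVec_zero]
  · simp [Finsupp.sum]

lemma sum_single_mul_apply {D : ℕ} (v : DMod D) (g : L D → ℂ) (l : L D) :
    (v.sum fun k c => Finsupp.single k (g k * c)) l = g l * v l := by
  classical
  rw [Finsupp.sum_apply, Finsupp.sum]
  simp only [Finsupp.single_apply]
  rw [Finset.sum_ite_eq' v.support l (fun k => g k * v k)]
  by_cases h : l ∈ v.support
  · simp [h]
  · simp [Finsupp.notMem_support_iff.mp h]

lemma forward_key {D : ℕ} {hb : ℝ} (hhb : 0 < hb) {q : ℂ} {F : Set (V D → ℂ)}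
    (hF0 : (0 : V D → ℂ) ∈ F) (hsep : SeparatesPts D F)
    (R R' : Matrix (Fin D) (Fin D) ℤ) (δ δ' : V D)
    (ψ : DMod D ≃ₗ[ℂ] DMod D)
    (hψ : ∀ a : Alg D, (∀ k, a k ∈ F) → ∀ v,
      ψ (dact D hb q R δ a v) = dact D hb q R' δ' a (ψ v)) :
    ∀ k : L D, ∃ l : L D,
      (Rinv R).mulVec (cz k) + δ = (Rinv R').mulVec (cz l) + δ' := by
  classical
  intro k
  set w := ψ (Finsupp.single k 1) with hw
  have hwne : w ≠ 0 := by
    rw [hw]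
    intro h
    have := ψ.injective (h.trans (map_zero ψ).symm)
    exact one_ne_zero (Finsupp.single_eq_zero.mp this)
  obtain ⟨l, hl⟩ := Finsupp.support_nonempty_iff.mpr hwne
  refine ⟨l, ?_⟩
  have hwl : w l ≠ 0 := Finsupp.mem_support_iff.mp hl
  have key : ∀ f ∈ F, f (hb • ((Rinv R).mulVec (cz k) + δ))
      = f (hb • ((Rinv R').mulVec (cz l) + δ')) := by
    intro f hf
    have ha : ∀ m, (Finsupp.single (0 : L D) f) m ∈ F := by
      intro m
      rcases eq_or_ne m 0 with h | h
      · simpa [h] using hf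
      · simpa [Finsupp.single_apply, Ne.symm h] using hF0
    have heq := hψ (Finsupp.single 0 f) ha (Finsupp.single k 1)
    rw [dact_diag, dact_diag] at heq
    rw [Finsupp.sum_single_index (by simp)] at heq
    have hsingle : Finsupp.single k (f (hb • ((Rinv R).mulVec (cz k) + δ)) * 1)
        = f (hb • ((Rinv R).mulVec (cz k) + δ)) • Finsupp.single k (1 : ℂ) := by
      rw [Finsupp.smul_single, smul_eq_mul]
    rw [hsingle, map_smul] at heq
    have := congrArg (fun u : DMod D => u l) heq
    simp only [Finsupp.smul_apply, smul_eq_mul] at this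
    rw [sum_single_mul_apply] at this
    rw [← hw] at this
    exact mul_right_cancel₀ hwl this
  by_contra hXY
  have hne : hb • ((Rinv R).mulVec (cz k) + δ) ≠ hb • ((Rinv R').mulVec (cz l) + δ') := by
    intro h
    exact hXY (smul_right_injective (V D) hhb.ne' h)
  obtain ⟨f, hf1, hf2⟩ := hsep _ _ hne
  exact hf2 (key f hf1)

lemma phi_apply {D : ℕ} (e : L D ≃ L D) (v : DMod D) :
    (Finsupp.domLCongr (M := ℂ) (R := ℂ) e) v = Finsupp.mapDomain e v := by
  rw [Finsupp.domLCongr_apply, Finsupp.domCongr_apply, Finsupp.equivMapDomain_eq_mapDomain]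

lemma backward_intertwine {D : ℕ} (hb : ℝ) (q : ℂ)
    (R R' : Matrix (Fin D) (Fin D) ℤ) (δ δ' : V D)
    (e : L D ≃ L D)
    (hA : ∀ (k : L D) (n : L D), e (k - R.mulVec n) = e k - R'.mulVec n)
    (hB : ∀ k : L D, (Rinv R).mulVec (cz k) + δ = (Rinv R').mulVec (cz (e k)) + δ') :
    ∀ (a : Alg D) (v : DMod D),
      (Finsupp.domLCongr (M := ℂ) (R := ℂ) e) (dact D hb q R δ a v)
        = dact D hb q R' δ' a ((Finsupp.domLCongr (M := ℂ) (R := ℂ) e) v) := by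
  intro a v
  unfold dact
  rw [map_finsuppSum]
  refine Finsupp.sum_congr fun n hn => ?_
  rw [map_finsuppSum]
  conv_rhs => rw [phi_apply, Finsupp.sum_mapDomain_index_inj e.injective]
  refine Finsupp.sum_congr fun k hk => ?_
  have hv : (Rinv R).mulVec (cz k) - cz n + δ
      = (Rinv R').mulVec (cz (e k)) - cz n + δ' := by
    have h := hB k
    have e1 : (Rinv R).mulVec (cz k) - cz n + δ
        = ((Rinv R).mulVec (cz k) + δ) - cz n := by abel
    have e2 : (Rinv R').mulVec (cz (e k)) - cz n + δ'
        = ((Rinv R').mulVec (cz (e k)) + δ') - cz n := by abel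
    rw [e1, e2, h]
  rw [Finsupp.domLCongr_single, hA, hv]

theorem stmt8' (D : ℕ) (hb : ℝ) (hhb : 0 < hb) (q : ℂ)
    (F : Set (V D → ℂ)) (hF0 : (0 : V D → ℂ) ∈ F) (hsep : SeparatesPts D F)
    (R R' : Matrix (Fin D) (Fin D) ℤ) (hR : R.det ≠ 0) (hR' : R'.det ≠ 0)
    (δ δ' : V D) :
    (∃ φ : DMod D ≃ₗ[ℂ] DMod D,
      ∀ a : Alg D, (∀ k, a k ∈ F) → ∀ v : DMod D,
        φ (dact D hb q R δ a v) = dact D hb q R' δ' a (φ v)) ↔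
      ((∃ U : Matrix (Fin D) (Fin D) ℤ, IsUnit U.det ∧ R = U * R') ∧
        ∃ z : L D, (R.map (Int.cast : ℤ → ℝ)).mulVec (δ - δ') = cz z) := by
  classical
  set Rr := R.map (Int.cast : ℤ → ℝ) with hRrdef
  set Rr' := R'.map (Int.cast : ℤ → ℝ) with hRr'def
  have hRu : IsUnit Rr.det := isUnit_det_cast hR
  have hRu' : IsUnit Rr'.det := isUnit_det_cast hR'
  have hinv : Rinv R = Rr⁻¹ := rfl
  have hinv' : Rinv R' = Rr'⁻¹ := rfl
  have hRl : Rr⁻¹ * Rr = 1 := Matrix.nonsing_inv_mul _ hRu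
  have hRm : Rr * Rr⁻¹ = 1 := Matrix.mul_nonsing_inv _ hRu
  have hRl' : Rr'⁻¹ * Rr' = 1 := Matrix.nonsing_inv_mul _ hRu'
  have hRm' : Rr' * Rr'⁻¹ = 1 := Matrix.mul_nonsing_inv _ hRu'
  constructor
  · rintro ⟨φ, hφ⟩
    have hψ' : ∀ a : Alg D, (∀ k, a k ∈ F) → ∀ v,
        φ.symm (dact D hb q R' δ' a v) = dact D hb q R δ a (φ.symm v) := by
      intro a ha v
      apply φ.injective
      rw [φ.apply_symm_apply, hφ a ha, φ.apply_symm_apply]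
    have P1 := forward_key hhb hF0 hsep R R' δ δ' φ hφ
    have P2 := forward_key hhb hF0 hsep R' R δ' δ φ.symm hψ'
    have conv : ∀ (S S' : Matrix (Fin D) (Fin D) ℤ) (Sr Sr' : Matrix (Fin D) (Fin D) ℝ)
        (ε ε' : V D), S.map (Int.cast : ℤ → ℝ) = Sr → S'.map (Int.cast : ℤ → ℝ) = Sr' →
        Sr' * Sr'⁻¹ = 1 →
        (∀ k : L D, ∃ l : L D,
          (Rinv S).mulVec (cz k) + ε = (Rinv S').mulVec (cz l) + ε') →
        (∀ k : L D, ∃ l : L D,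
          cz l = (Sr' * Sr⁻¹).mulVec (cz k) + Sr'.mulVec (ε - ε')) := by
      intro S S' Sr Sr' ε ε' hS hS' hm' P k
      obtain ⟨l, hl⟩ := P k
      refine ⟨l, ?_⟩
      rw [show Rinv S = Sr⁻¹ by rw [Rinv, hS], show Rinv S' = Sr'⁻¹ by rw [Rinv, hS']] at hl
      have h1 : Sr'⁻¹.mulVec (cz l) = Sr⁻¹.mulVec (cz k) + (ε - ε') := by
        have h2 := eq_sub_of_add_eq hl.symm
        rw [h2, add_sub_assoc]
      calc cz l = Sr'.mulVec (Sr'⁻¹.mulVec (cz l)) := by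
            rw [Matrix.mulVec_mulVec, hm', Matrix.one_mulVec]
        _ = Sr'.mulVec (Sr⁻¹.mulVec (cz k) + (ε - ε')) := by rw [h1]
        _ = (Sr' * Sr⁻¹).mulVec (cz k) + Sr'.mulVec (ε - ε') := by
            rw [Matrix.mulVec_add, Matrix.mulVec_mulVec]
    have P1' := conv R R' Rr Rr' δ δ' rfl rfl hRm' P1
    have P2' := conv R' R Rr' Rr δ' δ rfl rfl hRm P2
    choose g hg using P1'
    choose g' hg' using P2'
    have hz0 : cz (g' 0) = Rr.mulVec (δ' - δ) := by
      have := hg' 0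
      rwa [cz_zero, Matrix.mulVec_zero, zero_add] at this
    have hzcond : Rr.mulVec (δ - δ') = cz (-(g' 0)) := by
      rw [cz_neg, hz0, ← Matrix.mulVec_neg, neg_sub]
    have hBcol : ∀ i : Fin D, cz (g' (Pi.single i 1) - g' 0)
        = (Rr * Rr'⁻¹).mulVec (Pi.single i (1:ℝ)) := by
      intro i
      rw [cz_sub, hg' _, hz0, cz_single]
      abel
    have hBcol' : ∀ i : Fin D, cz (g (Pi.single i 1) - g 0)
        = (Rr' * Rr⁻¹).mulVec (Pi.single i (1:ℝ)) := by
      intro i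
      have hz0' : cz (g 0) = Rr'.mulVec (δ - δ') := by
        have := hg 0
        rwa [cz_zero, Matrix.mulVec_zero, zero_add] at this
      rw [cz_sub, hg _, hz0', cz_single]
      abel
    set U : Matrix (Fin D) (Fin D) ℤ :=
      Matrix.of (fun j i => (g' (Pi.single i 1) - g' 0) j) with hUdef
    set W : Matrix (Fin D) (Fin D) ℤ :=
      Matrix.of (fun j i => (g (Pi.single i 1) - g 0) j) with hWdef
    have hUB : U.map (Int.cast : ℤ → ℝ) = Rr * Rr'⁻¹ := by
      ext j i
      have := congrFun (hBcol i) j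
      rw [Matrix.mulVec_single_one] at this; simp only [Matrix.col_apply] at this
      simpa [Matrix.map_apply, hUdef, cz] using this
    have hWB : W.map (Int.cast : ℤ → ℝ) = Rr' * Rr⁻¹ := by
      ext j i
      have := congrFun (hBcol' i) j
      rw [Matrix.mulVec_single_one] at this; simp only [Matrix.col_apply] at this
      simpa [Matrix.map_apply, hWdef, cz] using this
    have hmul1 : (Rr * Rr'⁻¹) * (Rr' * Rr⁻¹) = 1 := by
      rw [Matrix.mul_assoc, ← Matrix.mul_assoc Rr'⁻¹ Rr' Rr⁻¹, hRl', Matrix.one_mul, hRm]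
    have hUW : U * W = 1 := by
      apply map_cast_inj
      rw [map_cast_mul, hUB, hWB, hmul1, Matrix.map_one _ Int.cast_zero Int.cast_one]
    have hUdetu : IsUnit U.det :=
      IsUnit.of_mul_eq_one W.det (by rw [← Matrix.det_mul, hUW, Matrix.det_one])
    have hRUR' : R = U * R' := by
      apply map_cast_inj
      rw [map_cast_mul, hUB, Matrix.mul_assoc, hRl', Matrix.mul_one]
    exact ⟨⟨U, hUdetu, hRUR'⟩, ⟨-(g' 0), hzcond⟩⟩
  · rintro ⟨⟨U, hUdet, hRUR'⟩, z, hz⟩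
    obtain ⟨u, hu⟩ := (Matrix.isUnit_iff_isUnit_det U).mpr hUdet
    set W := (↑u⁻¹ : Matrix (Fin D) (Fin D) ℤ) with hWdef
    have hUW : U * W = 1 := by rw [← hu, hWdef]; exact u.mul_inv
    have hWU : W * U = 1 := by rw [← hu, hWdef]; exact u.inv_mul
    set e : L D ≃ L D :=
      { toFun := fun k => W.mulVec (k + z)
        invFun := fun l => U.mulVec l - z
        left_inv := by
          intro k
          simp only []
          rw [Matrix.mulVec_mulVec, hUW, Matrix.one_mulVec, add_sub_cancel_right]
        right_inv := by
          intro l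
          simp only []
          rw [sub_add_cancel, Matrix.mulVec_mulVec, hWU, Matrix.one_mulVec] } with hedef
    have hA : ∀ (k n : L D), e (k - R.mulVec n) = e k - R'.mulVec n := by
      intro k n
      show W.mulVec (k - R.mulVec n + z) = W.mulVec (k + z) - R'.mulVec n
      have h1 : k - R.mulVec n + z = (k + z) - R.mulVec n := by abel
      rw [h1, Matrix.mulVec_sub, Matrix.mulVec_mulVec, hRUR', ← Matrix.mul_assoc, hWU,
        Matrix.one_mul]
    have hB : ∀ k : L D, (Rinv R).mulVec (cz k) + δ = (Rinv R').mulVec (cz (e k)) + δ' := by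
      intro k
      have hek : cz (e k) = (W.map (Int.cast : ℤ → ℝ)).mulVec (cz k + cz z) := by
        show cz (W.mulVec (k + z)) = _
        rw [cz_mulVec, cz_add]
      have hUr : (U.map (Int.cast : ℤ → ℝ)) * (W.map (Int.cast : ℤ → ℝ)) = 1 := by
        rw [← map_cast_mul, hUW, Matrix.map_one _ Int.cast_zero Int.cast_one]
      have hWinv : (U.map (Int.cast : ℤ → ℝ))⁻¹ = W.map (Int.cast : ℤ → ℝ) :=
        Matrix.inv_eq_right_inv hUr
      have hRfac : Rr = (U.map (Int.cast : ℤ → ℝ)) * Rr' := by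
        rw [hRrdef, hRUR', map_cast_mul, hRr'def]
      have hkey : Rr'⁻¹ * (W.map (Int.cast : ℤ → ℝ)) = Rr⁻¹ := by
        rw [hRfac, Matrix.mul_inv_rev, hWinv]
      have hzinv : Rr⁻¹.mulVec (cz z) = δ - δ' := by
        rw [← hz, Matrix.mulVec_mulVec, hRl, Matrix.one_mulVec]
      rw [hinv, hinv', hek, Matrix.mulVec_mulVec, hkey, Matrix.mulVec_add, hzinv]
      abel
    refine ⟨Finsupp.domLCongr (M := ℂ) (R := ℂ) e, fun a ha v => ?_⟩
    exact backward_intertwine hb q R R' δ δ' e hA hB a v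


/-- Proposition 3.9: if `F` separates points, then `S_ħ(R,δ) ≅ S_ħ(R̃,δ̃)` if and only if
`R R̃⁻¹ ∈ GL_D(ℤ)` (i.e. `R = U R̃` for some `U ∈ GL_D(ℤ)`) and `R(δ−δ̃) ∈ ℤ^D`. -/
theorem stmt8 (D : ℕ) (hb : ℝ) (hhb : 0 < hb) (q : ℂ) (hq : ‖q‖ = 1)
    (F : Set (V D → ℂ)) (hF : GoodF D hb F) (hsep : SeparatesPts D F)
    (R R' : Matrix (Fin D) (Fin D) ℤ) (hR : R.det ≠ 0) (hR' : R'.det ≠ 0)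
    (δ δ' : V D) :
    DIso D hb q F R δ R' δ' ↔
      ((∃ U : Matrix (Fin D) (Fin D) ℤ, IsUnit U.det ∧ R = U * R') ∧
        ∃ z : L D, (R.map (Int.cast : ℤ → ℝ)).mulVec (δ - δ') = cz z) := by
  exact stmt8' D hb hhb q F hF.zero_mem hsep R R' hR hR' δ δ'
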